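/- Let G = (V, E) be a finite undirected simple graph and let s ≥ 1 be an integer. If F ⊆ V induces an s-bundle in G and v ∈ F, then the set F ∩ N_G(v) also induces an s-bundle in G and |F ∩ N_G(v)| ≥ |F| − s (as integers). Consequently, if every subset of N_G(v) inducing an s-bundle has size at most B, then every s-bundle containing v has size at most B + s (justifying the PUB-based vertex-reduction rule). -/
import Mathlib


open Finset

variable {V : Type*} [Fintype V] [DecidableEq V]

/-- `S` induces an `s`-bundle in `G`: for every `T ⊆ S` with `|T| < |S| - s`,
the subgraph of `G` induced on `S \ T` is connected. -/
def IsSBundle (G : SimpleGraph V) (s : ℕ) (S : Finset V) : Prop :=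
  ∀ T ⊆ S, (T.card : ℤ) < (S.card : ℤ) - (s : ℤ) →
    (G.induce (↑(S \ T) : Set V)).Connected

/-- PUB-based vertex reduction rule: for an `s`-bundle `F` containing `v`,
`F ∩ N_G(v)` is an `s`-bundle with at least `|F| - s` vertices; hence if every
`s`-bundle inside `N_G(v)` has at most `B` vertices, then `|F| ≤ B + s`. -/
theorem sBundle_inter_neighbors (G : SimpleGraph V) [DecidableRel G.Adj]
    (s : ℕ) (hs : 1 ≤ s) (F : Finset V) (hF : IsSBundle G s F)
    (v : V) (hv : v ∈ F) (B : ℕ)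
    (hB : ∀ P ⊆ G.neighborFinset v, IsSBundle G s P → P.card ≤ B) :
    IsSBundle G s (F ∩ G.neighborFinset v) ∧
    ((F ∩ G.neighborFinset v).card : ℤ) ≥ (F.card : ℤ) - (s : ℤ) ∧
    F.card ≤ B + s := by
    classical
  set N := F ∩ G.neighborFinset v with hN
  have hNsub : N ⊆ F := inter_subset_left
  have hvN : v ∉ N := by simp [hN]
  have hNF := card_le_card hNsub
  have hcard : (N.card : ℤ) ≥ (F.card : ℤ) - s := by
    by_contra h
    push_neg at h
    have hconn := hF N hNsub h
    have hvmem : v ∈ F \ N := mem_sdiff.2 ⟨hv, hvN⟩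
    have h2 : 1 < (F \ N).card := by
      have := card_sdiff_of_subset hNsub
      omega
    obtain ⟨w, hw, hwv⟩ := Finset.exists_mem_ne h2 v
    obtain ⟨p⟩ := hconn.preconnected ⟨v, by simpa using hvmem⟩ ⟨w, by simpa using hw⟩
    cases p with
    | nil => exact hwv rfl
    | cons hadj' p =>
      rename_i u
      have hadj : G.Adj v (u : V) := hadj'
      have : (u : V) ∈ N := by
        have hu : (u : V) ∈ F \ N := by simpa using u.2
        simp only [hN, mem_inter, SimpleGraph.mem_neighborFinset]
        exact ⟨(mem_sdiff.1 hu).1, hadj⟩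
      have hu : (u : V) ∈ F \ N := by simpa using u.2
      exact (mem_sdiff.1 hu).2 this
  have hbundle : IsSBundle G s N := by
    intro T hT hTlt
    have hsub2 : N \ T ⊆ F := sdiff_subset.trans hNsub
    have key := hF (F \ (N \ T)) sdiff_subset (by
      have h1 := card_sdiff_of_subset hsub2
      have h2 := card_sdiff_of_subset hT
      have h3 := card_le_card hsub2
      have h4 := card_le_card hT
      omega)
    rwa [Finset.sdiff_sdiff_eq_self hsub2] at key
  refine ⟨hbundle, hcard, ?_⟩
  have hNB := hB N inter_subset_right hbundle
  omega
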